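/- Let V be a finite-dimensional real vector space, W a real vector space, p : W → V a surjective linear map, T : V → W an injective linear map whose image equals ker p, α : V → W a linear map with p ∘ α = id_V, and B : V → V a linear map. Let A : ℂ ⊗_ℝ V → ℂ ⊗_ℝ W be the complex-linear map A = α_ℂ + i·(T ∘ B)_ℂ, where the subscript ℂ denotes complexification, and let conjugation on ℂ ⊗_ℝ W be induced by complex conjugation on the ℂ factor. Then A(ℂ ⊗_ℝ V) ∩ conj(A(ℂ ⊗_ℝ V)) = 0 if and only if B is bijective. -/
import Mathlib


open TensorProduct

/-- Pointwise condition characterizing when the complex horizontal distribution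
`A = α_ℂ + i (T∘B)_ℂ` determines an almost complex structure: the image of `A`
intersects its conjugate trivially iff `B` is bijective. -/
theorem totally_real_pair_condition
    {V W : Type*} [AddCommGroup V] [Module ℝ V] [FiniteDimensional ℝ V]
    [AddCommGroup W] [Module ℝ W]
    (p : W →ₗ[ℝ] V) (hp : Function.Surjective p)
    (T : V →ₗ[ℝ] W) (hT : Function.Injective T)
    (hTp : LinearMap.range T = LinearMap.ker p)
    (α : V →ₗ[ℝ] W) (hα : p.comp α = LinearMap.id)
    (B : V →ₗ[ℝ] V) :
    ((LinearMap.range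
        (LinearMap.baseChange ℂ α +
          Complex.I • LinearMap.baseChange ℂ (T.comp B))).restrictScalars ℝ ⊓
      Submodule.map (TensorProduct.map Complex.conjAe.toLinearMap (LinearMap.id : W →ₗ[ℝ] W))
        ((LinearMap.range
            (LinearMap.baseChange ℂ α +
              Complex.I • LinearMap.baseChange ℂ (T.comp B))).restrictScalars ℝ) = ⊥)
    ↔ Function.Bijective B := by
  classical
  set M : (ℂ ⊗[ℝ] V) →ₗ[ℂ] (ℂ ⊗[ℝ] W) := LinearMap.baseChange ℂ (T.comp B) with hM
  set A : (ℂ ⊗[ℝ] V) →ₗ[ℂ] (ℂ ⊗[ℝ] W) := LinearMap.baseChange ℂ α + Complex.I • M with hA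
  set A' : (ℂ ⊗[ℝ] V) →ₗ[ℂ] (ℂ ⊗[ℝ] W) := LinearMap.baseChange ℂ α - Complex.I • M with hA'
  set cW : (ℂ ⊗[ℝ] W) →ₗ[ℝ] (ℂ ⊗[ℝ] W) :=
    TensorProduct.map Complex.conjAe.toLinearMap (LinearMap.id : W →ₗ[ℝ] W) with hcW
  set cV : (ℂ ⊗[ℝ] V) →ₗ[ℝ] (ℂ ⊗[ℝ] V) :=
    TensorProduct.map Complex.conjAe.toLinearMap (LinearMap.id : V →ₗ[ℝ] V) with hcV
  set P : (ℂ ⊗[ℝ] W) →ₗ[ℂ] (ℂ ⊗[ℝ] V) := LinearMap.baseChange ℂ p with hP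
  -- basic pointwise facts
  have hpα : ∀ v : V, p (α v) = v := fun v => LinearMap.ext_iff.mp hα v
  have hpT : ∀ v : V, p (T v) = 0 := by
    intro v
    have : T v ∈ LinearMap.ker p := hTp ▸ LinearMap.mem_range_self T v
    exact this
  -- P is a left inverse of both A and A'
  have hPA : ∀ x, P (A x) = x := by
    intro x
    induction x using TensorProduct.induction_on with
    | zero => simp
    | tmul z v =>
        simp [hA, hM, hP, LinearMap.baseChange_tmul, hpα, hpT, tmul_zero]
    | add a b ha hb => simp [map_add, ha, hb]
  have hPA' : ∀ x, P (A' x) = x := by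
    intro x
    induction x using TensorProduct.induction_on with
    | zero => simp
    | tmul z v =>
        simp [hA', hM, hP, LinearMap.baseChange_tmul, hpα, hpT, tmul_zero]
    | add a b ha hb => simp [map_add, ha, hb]
  -- conjugation intertwines A and A'
  have hconj : ∀ x, cW (A x) = A' (cV x) := by
    intro x
    induction x using TensorProduct.induction_on with
    | zero => simp
    | tmul z v =>
        simp only [hA, hA', hM, hcW, hcV, LinearMap.add_apply, LinearMap.sub_apply,
          LinearMap.smul_apply, LinearMap.baseChange_tmul, TensorProduct.smul_tmul',
          map_add, TensorProduct.map_tmul, AlgEquiv.toLinearMap_apply, LinearMap.id_apply,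
          LinearMap.comp_apply]
        have hz : Complex.conjAe (Complex.I • z) = -(Complex.I • Complex.conjAe z) := by
          simp only [smul_eq_mul, map_mul]
          apply Complex.ext <;> simp
        rw [hz, neg_tmul, sub_eq_add_neg]
    | add a b ha hb => simp [map_add, ha, hb]
  -- cV is an involution
  have hcVinv : ∀ x, cV (cV x) = x := by
    intro x
    induction x using TensorProduct.induction_on with
    | zero => simp
    | tmul z v => simp [hcV, TensorProduct.map_tmul]
    | add a b ha hb => simp [map_add, ha, hb]
  -- M decomposes
  have hMdec : ∀ x, M x = LinearMap.baseChange ℂ T (LinearMap.baseChange ℂ B x) := by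
    intro x
    induction x using TensorProduct.induction_on with
    | zero => simp
    | tmul z v => simp [hM, LinearMap.baseChange_tmul]
    | add a b ha hb => simp [map_add, ha, hb]
  -- base change of an injective map (with finite-dimensional domain) is injective
  obtain ⟨t, ht⟩ := T.exists_leftInverse_of_injective (LinearMap.ker_eq_bot.mpr hT)
  have hTinj : ∀ x, LinearMap.baseChange ℂ t (LinearMap.baseChange ℂ T x) = x := by
    intro x
    induction x using TensorProduct.induction_on with
    | zero => simp
    | tmul z v =>
        have : t (T v) = v := LinearMap.ext_iff.mp ht v
        simp [LinearMap.baseChange_tmul, this]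
    | add a b ha hb => simp [map_add, ha, hb]
  -- a retraction ℂ ⊗ V → V hitting 1 ⊗ v ↦ v
  set r : (ℂ ⊗[ℝ] V) →ₗ[ℝ] V :=
    TensorProduct.lift ((LinearMap.lsmul ℝ V).comp Complex.reLm) with hr
  have hr1 : ∀ v : V, r ((1 : ℂ) ⊗ₜ[ℝ] v) = v := by
    intro v; simp [hr]
  constructor
  · -- trivial intersection → B bijective
    intro h
    have hinj : Function.Injective B := by
      have hker : ∀ v : V, B v = 0 → v = 0 := by
        intro v hv
        set x := A ((1 : ℂ) ⊗ₜ[ℝ] v) with hx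
        have hxA : x = (1 : ℂ) ⊗ₜ[ℝ] (α v) := by
          simp [hx, hA, hM, LinearMap.baseChange_tmul, hv, tmul_zero]
        have hmem1 : x ∈ (LinearMap.range A).restrictScalars ℝ := by
          exact ⟨(1 : ℂ) ⊗ₜ[ℝ] v, rfl⟩
        have hmem2 : x ∈ Submodule.map cW ((LinearMap.range A).restrictScalars ℝ) := by
          refine ⟨x, hmem1, ?_⟩
          rw [hx, hconj]
          have hcv : cV ((1 : ℂ) ⊗ₜ[ℝ] v) = (1 : ℂ) ⊗ₜ[ℝ] v := by
            simp [hcV, TensorProduct.map_tmul]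
          rw [hcv, ← hx, hxA]
          simp [hA', hM, LinearMap.baseChange_tmul, hv, tmul_zero]
        have hx0 : x = 0 := by
          have := h ▸ (Submodule.mem_inf.mpr ⟨hmem1, hmem2⟩)
          simpa using this
        have h1v : (1 : ℂ) ⊗ₜ[ℝ] v = (0 : ℂ ⊗[ℝ] V) := by
          have := hPA ((1 : ℂ) ⊗ₜ[ℝ] v)
          rw [← hx, hx0] at this
          simpa using this.symm
        have := congrArg r h1v
        simpa [hr1] using this
      intro a b hab
      have : B (a - b) = 0 := by simp [map_sub, hab]
      have := hker _ this
      exact sub_eq_zero.mp this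
    exact ⟨hinj, LinearMap.injective_iff_surjective.mp hinj⟩
  · -- B bijective → trivial intersection
    intro hB
    obtain ⟨b, hb⟩ := B.exists_leftInverse_of_injective (LinearMap.ker_eq_bot.mpr hB.injective)
    have hBinj : ∀ x, LinearMap.baseChange ℂ b (LinearMap.baseChange ℂ B x) = x := by
      intro x
      induction x using TensorProduct.induction_on with
      | zero => simp
      | tmul z v =>
          have : b (B v) = v := LinearMap.ext_iff.mp hb v
          simp [LinearMap.baseChange_tmul, this]
      | add a c ha hc => simp [map_add, ha, hc]
    rw [Submodule.eq_bot_iff]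
    intro x hx
    obtain ⟨hx1, hx2⟩ := Submodule.mem_inf.mp hx
    obtain ⟨u, hu⟩ := hx1
    obtain ⟨y, hy, hcy⟩ := hx2
    obtain ⟨u', hu'⟩ := hy
    have hxA' : x = A' (cV u') := by
      rw [← hcy, ← hu', hconj]
    -- apply P to both descriptions of x
    have hus : u = cV u' := by
      have h1 : P x = u := by rw [← hu, hPA]
      have h2 : P x = cV u' := by rw [hxA', hPA']
      rw [← h1, h2]
    have hAA' : A u = A' u := by
      rw [hu, hxA', ← hus]
    have hMu : M u = 0 := by
      have h3 : LinearMap.baseChange ℂ α u + Complex.I • M u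
          = LinearMap.baseChange ℂ α u - Complex.I • M u := by
        simpa [hA, hA', LinearMap.add_apply, LinearMap.sub_apply, LinearMap.smul_apply]
          using hAA'
      have h4 : Complex.I • M u = -(Complex.I • M u) := by
        rw [sub_eq_add_neg] at h3
        exact add_left_cancel h3
      have h5 : ((2 : ℂ) * Complex.I) • M u = 0 := by
        rw [mul_smul, two_smul]
        exact eq_neg_iff_add_eq_zero.mp h4
      have h6 : M u = (((2 : ℂ) * Complex.I)⁻¹ * ((2 : ℂ) * Complex.I)) • M u := by
        rw [inv_mul_cancel₀ (by simp [Complex.ext_iff] : (2 : ℂ) * Complex.I ≠ 0), one_smul]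
      rw [h6, mul_smul, h5, smul_zero]
    have hBu : LinearMap.baseChange ℂ B u = 0 := by
      have := hMdec u
      rw [hMu] at this
      have := congrArg (LinearMap.baseChange ℂ t) this.symm
      rw [hTinj] at this
      simpa using this
    have hu0 : u = 0 := by
      have := congrArg (LinearMap.baseChange ℂ b) hBu
      rw [hBinj] at this
      simpa using this
    rw [← hu, hu0, map_zero]
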